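/- Let f : ℝ^d × Ξ → ℝ be a random function and O ⊆ ℝ^d an open set. Assume (Assumption A) f(x) := E_{ξ∼P}[f(x, ξ)] < ∞ for all x ∈ O, and (Assumption B) for every x ∈ O there exist ε(x) > 0 and a nonnegative measurable λ(x, ξ) with E_{ξ∼P}[λ(x, ξ)] < ∞ such that y ↦ f(y, ξ) + (λ(x,ξ)/2)‖y‖² is convex on B(x; ε(x)). Let ξ₁, …, ξ_m be i.i.d. samples from P and f_S(x) = (1/m) Σ_{i=1}^m f(x, ξ_i). Then with probability one, f_S is locally weakly convex on O; moreover f(x) = E[f_S(x)] is locally weakly convex on O. -/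

import Mathlib

open MeasureTheory Metric Set Filter
open scoped InnerProductSpace ENNReal NNReal Topology

noncomputable section

variable {E : Type*} [NormedAddCommGroup E] [InnerProductSpace ℝ E]

/-- `f` is locally weakly convex on `O`. -/
def LocWeaklyConvexOn (f : E → ℝ) (O : Set E) : Prop :=
  ∀ x ∈ O, ∃ lam : ℝ, ∃ ε > 0, ConvexOn ℝ (ball x ε) (fun y => f y + lam / 2 * ‖y‖ ^ 2)

lemma convexOn_finset_sum {ι : Type*} (s : Finset ι) {t : Set E} (ht : Convex ℝ t)
    (g : ι → E → ℝ) (h : ∀ i ∈ s, ConvexOn ℝ t (g i)) :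
    ConvexOn ℝ t (fun y => ∑ i ∈ s, g i y) := by
  classical
  induction s using Finset.induction with
  | empty => simpa using convexOn_const 0 ht
  | insert a s' hni ih =>
    simp only [Finset.sum_insert hni]
    exact (h a (Finset.mem_insert_self a s')).add
      (ih fun i hi => h i (Finset.mem_insert_of_mem hi))

/-- Under Assumption A (finite population risk on the open set `O`) and
Assumption B (local weak convexity of `f(·, ξ)` with integrable modulus), with probability one
over i.i.d. samples `ξ₁, …, ξ_m ∼ P`, the empirical risk `f_S(x) = (1/m) Σᵢ f(x, ξᵢ)` is
locally weakly convex on `O`; moreover the population risk `f(x) = E[f(x, ξ)]` is locally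
weakly convex on `O`. -/
theorem statement4
    (d m : ℕ) (hm : 0 < m)
    (Ξ : Type*) [MeasurableSpace Ξ] (P : Measure Ξ) [IsProbabilityMeasure P]
    (f : EuclideanSpace ℝ (Fin d) → Ξ → ℝ) (hfmeas : ∀ x, Measurable (f x))
    (O : Set (EuclideanSpace ℝ (Fin d))) (hO : IsOpen O)
    (hA : ∀ x ∈ O, Integrable (f x) P)
    (hB : ∀ x ∈ O, ∃ ε > 0, ∃ lam : Ξ → ℝ, Measurable lam ∧ (∀ ξ, 0 ≤ lam ξ) ∧
      Integrable lam P ∧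
      ∀ ξ, ConvexOn ℝ (ball x ε) (fun y => f y ξ + lam ξ / 2 * ‖y‖ ^ 2)) :
    (∀ᵐ ω ∂(Measure.pi fun _ : Fin m => P),
      LocWeaklyConvexOn (fun x => (m : ℝ)⁻¹ * ∑ i, f x (ω i)) O) ∧
    LocWeaklyConvexOn (fun x => ∫ ξ, f x ξ ∂P) O := by
  constructor
  · -- holds for every ω, hence almost every ω
    refine Filter.Eventually.of_forall (fun ω => ?_)
    intro x hx
    obtain ⟨ε, hε, lam, hlamM, hlam0, hlamI, hconv⟩ := hB x hx
    refine ⟨(m : ℝ)⁻¹ * ∑ i, lam (ω i), ε, hε, ?_⟩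
    have key : ConvexOn ℝ (ball x ε)
        (fun y => (m : ℝ)⁻¹ • ∑ i, (f y (ω i) + lam (ω i) / 2 * ‖y‖ ^ 2)) := by
      refine ConvexOn.smul (by positivity) ?_
      exact convexOn_finset_sum _ (convex_ball x ε) _ (fun i _ => hconv (ω i))
    convert key using 2 with y
    · rfl
    simp only [smul_eq_mul, Finset.sum_add_distrib, ← Finset.mul_sum, ← Finset.sum_div, ← Finset.sum_mul]
    ring
  · intro x hx
    obtain ⟨ε₁, hε₁, hball₁⟩ := Metric.isOpen_iff.1 hO x hx
    obtain ⟨ε, hε, lam, hlamM, hlam0, hlamI, hconv⟩ := hB x hx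
    set ε' := min ε ε₁ with hε'def
    have hε' : 0 < ε' := lt_min hε hε₁
    have hsubO : ball x ε' ⊆ O := fun y hy => hball₁ (ball_subset_ball (min_le_right _ _) hy)
    have hsubε : ball x ε' ⊆ ball x ε := ball_subset_ball (min_le_left _ _)
    refine ⟨∫ ξ, lam ξ ∂P, ε', hε', ?_⟩
    have hint : ∀ w ∈ ball x ε',
        Integrable (fun ξ => f w ξ + lam ξ / 2 * ‖w‖ ^ 2) P := fun w hw =>
      (hA w (hsubO hw)).add (((hlamI.div_const 2).mul_const _))
    have hval : ∀ w ∈ ball x ε', (∫ ξ, (f w ξ + lam ξ / 2 * ‖w‖ ^ 2) ∂P)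
        = (∫ ξ, f w ξ ∂P) + (∫ ξ, lam ξ ∂P) / 2 * ‖w‖ ^ 2 := by
      intro w hw
      rw [integral_add (hA w (hsubO hw)) ((hlamI.div_const 2).mul_const _),
        integral_mul_const, integral_div]
    refine ⟨convex_ball x ε', ?_⟩
    intro y hy z hz a b ha hb hab
    have hmem : a • y + b • z ∈ ball x ε' := (convex_ball x ε') hy hz ha hb hab
    have hptwise : ∀ ξ, f (a • y + b • z) ξ + lam ξ / 2 * ‖a • y + b • z‖ ^ 2
        ≤ a * (f y ξ + lam ξ / 2 * ‖y‖ ^ 2) + b * (f z ξ + lam ξ / 2 * ‖z‖ ^ 2) := by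
      intro ξ
      exact (hconv ξ).2 (hsubε hy) (hsubε hz) ha hb hab
    have hmono : (∫ ξ, (f (a • y + b • z) ξ + lam ξ / 2 * ‖a • y + b • z‖ ^ 2) ∂P)
        ≤ ∫ ξ, (a * (f y ξ + lam ξ / 2 * ‖y‖ ^ 2) + b * (f z ξ + lam ξ / 2 * ‖z‖ ^ 2)) ∂P :=
      integral_mono (hint _ hmem)
        (((hint _ hy).const_mul a).add ((hint _ hz).const_mul b)) hptwise
    rw [integral_add ((hint _ hy).const_mul a) ((hint _ hz).const_mul b),
      integral_const_mul, integral_const_mul, hval _ hy, hval _ hz, hval _ hmem] at hmono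
    simpa using hmono
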